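/- Let K be an N×N real symmetric positive definite matrix with eigenvalues λ_1, …, λ_N (listed with multiplicity), let α > 0, and let K_{Z*} = K_{Z*}(K, α). Then (1/(2N))·log det(K + K_{Z*}) − (1/(2N))·log det(K_{Z*}) = (1/(2N)) · Σ_{k=1}^{N} log( (√(λ_k² + αλ_k) + λ_k) / (√(λ_k² + αλ_k) − λ_k) ). -/

import Mathlib

open Matrix Classical

/-- The positive semidefinite square root, as `Matrix.PosSemidef.sqrt` was defined in Mathlib
(December 2024); it has since been removed from Mathlib. -/
noncomputable def Matrix.PosSemidef.sqrt {n : Type*} [Fintype n] [DecidableEq n]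
    {A : Matrix n n ℝ} (hA : A.PosSemidef) : Matrix n n ℝ :=
  (hA.1.eigenvectorUnitary : Matrix n n ℝ) * diagonal ((↑) ∘ (√·) ∘ hA.1.eigenvalues) *
    (star hA.1.eigenvectorUnitary : Matrix n n ℝ)

/-- The positive semidefinite square root of a matrix (junk value `0` if the matrix is not
positive semidefinite). -/
noncomputable def matSqrt {N : ℕ} (A : Matrix (Fin N) (Fin N) ℝ) : Matrix (Fin N) (Fin N) ℝ :=
  if h : A.PosSemidef then h.sqrt else 0

/-- The optimal distortion covariance matrix
`K_{Z*}(K, α) = (1/2)((K² + αK)^{1/2} − K)`. -/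
noncomputable def Kzstar {N : ℕ} (K : Matrix (Fin N) (Fin N) ℝ) (α : ℝ) :
    Matrix (Fin N) (Fin N) ℝ :=
  (1 / 2 : ℝ) • (matSqrt (K ^ 2 + α • K) - K)

theorem sqrt_eq_of_sq_eq_aux {N : ℕ} (A B : Matrix (Fin N) (Fin N) ℝ) (hB : B.PosSemidef) (hA : A.PosSemidef)
    (h : B ^ 2 = A) : hA.sqrt = B := by
  have e1 : hA.sqrt = cfc Real.sqrt A := by
    rw [hA.1.cfc_eq, IsHermitian.cfc, Matrix.PosSemidef.sqrt, Unitary.conjStarAlgAut_apply]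
    rfl
  rw [e1, ← h, ← cfc_pow_id (R := ℝ) B 2 hB.1.isSelfAdjoint,
    ← cfc_comp Real.sqrt (fun x => x ^ 2) B hB.1.isSelfAdjoint]
  conv_rhs => rw [← cfc_id' ℝ B hB.1.isSelfAdjoint]
  apply cfc_congr
  intro x hx
  rw [hB.1.spectrum_real_eq_range_eigenvalues] at hx
  obtain ⟨i, rfl⟩ := hx
  simp [Real.sqrt_sq (hB.eigenvalues_nonneg i)]

theorem stmt_8 {N : ℕ} (K : Matrix (Fin N) (Fin N) ℝ) (hK : K.PosDef)
    (α : ℝ) (hα : 0 < α) :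
    (1 / (2 * (N : ℝ))) * Real.log (K + Kzstar K α).det
        - (1 / (2 * (N : ℝ))) * Real.log (Kzstar K α).det
      = (1 / (2 * (N : ℝ))) * ∑ k : Fin N,
          Real.log
            ((Real.sqrt (hK.1.eigenvalues k ^ 2 + α * hK.1.eigenvalues k) + hK.1.eigenvalues k) /
             (Real.sqrt (hK.1.eigenvalues k ^ 2 + α * hK.1.eigenvalues k) - hK.1.eigenvalues k)) := by
  set U : Matrix (Fin N) (Fin N) ℝ := ↑(hK.1.eigenvectorUnitary) with hU
  set lam : Fin N → ℝ := hK.1.eigenvalues with hlam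
  set s : Fin N → ℝ := fun k => Real.sqrt (lam k ^ 2 + α * lam k) with hs
  have hUU : star U * U = 1 := (Matrix.mem_unitaryGroup_iff').mp (hK.1.eigenvectorUnitary).2
  have hspec : K = U * diagonal lam * star U := by simpa using hK.1.spectral_theorem
  -- basic algebra of conjugated diagonals
  have hmul : ∀ f g : Fin N → ℝ,
      (U * diagonal f * star U) * (U * diagonal g * star U)
        = U * diagonal (fun k => f k * g k) * star U := by
    intro f g
    simp only [Matrix.mul_assoc]
    rw [← Matrix.mul_assoc (star U) U, hUU, one_mul, ← Matrix.mul_assoc (diagonal f),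
      diagonal_mul_diagonal]
  have hadd : ∀ f g : Fin N → ℝ,
      (U * diagonal f * star U) + (U * diagonal g * star U)
        = U * diagonal (fun k => f k + g k) * star U := by
    intro f g
    rw [← Matrix.add_mul, ← Matrix.mul_add, diagonal_add]
  have hsub : ∀ f g : Fin N → ℝ,
      (U * diagonal f * star U) - (U * diagonal g * star U)
        = U * diagonal (fun k => f k - g k) * star U := by
    intro f g
    rw [← Matrix.sub_mul, ← Matrix.mul_sub, diagonal_sub]
  have hsmul : ∀ (c : ℝ) (f : Fin N → ℝ),
      c • (U * diagonal f * star U) = U * diagonal (fun k => c * f k) * star U := by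
    intro c f
    rw [show (fun k => c * f k) = c • f from rfl, diagonal_smul, Matrix.mul_smul,
      Matrix.smul_mul]
  have hdet : ∀ f : Fin N → ℝ, (U * diagonal f * star U).det = ∏ k, f k := by
    intro f
    rw [det_mul, det_mul,
      show U.det * (diagonal f).det * (star U).det
        = ((star U).det * U.det) * (diagonal f).det by ring,
      ← det_mul, hUU, det_one, one_mul, det_diagonal]
  -- positivity facts
  have hlampos : ∀ k, 0 < lam k := fun k => hK.eigenvalues_pos k
  have hsq : ∀ k, 0 ≤ lam k ^ 2 + α * lam k := fun k =>
    add_nonneg (sq_nonneg _) (le_of_lt (mul_pos hα (hlampos k)))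
  have hslt : ∀ k, lam k < s k := by
    intro k
    rw [hs]
    exact (Real.lt_sqrt (hlampos k).le).mpr (by nlinarith [hlampos k])
  have hspos : ∀ k, 0 < s k := fun k => (hlampos k).trans (hslt k)
  -- identify the matrix square root
  have hKαeq : K ^ 2 + α • K = U * diagonal (fun k => lam k ^ 2 + α * lam k) * star U := by
    rw [pow_two]
    conv_lhs => rw [hspec]
    rw [hmul, hsmul, hadd]
    congr 2
    funext k
    exact congrFun (congrArg diagonal (funext fun k => by ring)) k
  have hB : (U * diagonal s * star U).PosSemidef :=
    (posSemidef_diagonal_iff.mpr fun k => (hspos k).le).mul_mul_conjTranspose_same U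
  have hBsq : (U * diagonal s * star U) ^ 2 = K ^ 2 + α • K := by
    rw [pow_two, hmul, hKαeq,
      show (fun k => s k * s k) = (fun k => lam k ^ 2 + α * lam k) from
        funext fun k => Real.mul_self_sqrt (hsq k)]
  have hKα : (K ^ 2 + α • K).PosSemidef := by rw [← hBsq]; exact hB.pow 2
  have hsqrt : matSqrt (K ^ 2 + α • K) = U * diagonal s * star U := by
    rw [matSqrt, dif_pos hKα]
    exact sqrt_eq_of_sq_eq_aux _ _ hB hKα hBsq
  -- determinants
  have h1 : (K + Kzstar K α) = (1/2 : ℝ) • (U * diagonal (fun k => s k + lam k) * star U) := by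
    rw [Kzstar, hsqrt, show K + (1/2 : ℝ) • (U * diagonal s * star U - K)
        = (1/2 : ℝ) • (U * diagonal s * star U + K) by module]
    conv_lhs => rw [hspec]
    rw [hadd]
  have h2 : Kzstar K α = (1/2 : ℝ) • (U * diagonal (fun k => s k - lam k) * star U) := by
    rw [Kzstar, hsqrt]
    conv_lhs => rw [hspec]
    rw [hsub]
  have hd1 : (K + Kzstar K α).det = (1/2 : ℝ) ^ N * ∏ k, (s k + lam k) := by
    rw [h1, det_smul, hdet]; simp
  have hd2 : (Kzstar K α).det = (1/2 : ℝ) ^ N * ∏ k, (s k - lam k) := by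
    rw [h2, det_smul, hdet]; simp
  -- logs
  have hp1 : ∀ k, (0:ℝ) < s k + lam k := fun k => add_pos (hspos k) (hlampos k)
  have hp2 : ∀ k, (0:ℝ) < s k - lam k := fun k => sub_pos.mpr (hslt k)
  have hlog1 : Real.log (K + Kzstar K α).det
      = N * Real.log (1/2) + ∑ k, Real.log (s k + lam k) := by
    rw [hd1, Real.log_mul (pow_ne_zero _ (by norm_num)) (Finset.prod_pos fun k _ => hp1 k).ne',
      Real.log_pow, Real.log_prod (fun k _ => (hp1 k).ne')]
  have hlog2 : Real.log (Kzstar K α).det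
      = N * Real.log (1/2) + ∑ k, Real.log (s k - lam k) := by
    rw [hd2, Real.log_mul (pow_ne_zero _ (by norm_num)) (Finset.prod_pos fun k _ => hp2 k).ne',
      Real.log_pow, Real.log_prod (fun k _ => (hp2 k).ne')]
  rw [← mul_sub, hlog1, hlog2]
  congr 1
  rw [add_sub_add_left_eq_sub, ← Finset.sum_sub_distrib]
  exact Finset.sum_congr rfl fun k _ => (Real.log_div (hp1 k).ne' (hp2 k).ne').symm
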